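/- arXiv:2506.14892 — 3 statements merged into one kernel-verified Lean document; each statement's English description precedes it below -/
import Mathlib

section
/- If π' covers π in the partition lattice of a finite set X, and π' is obtained by merging blocks B_i and B_j of π, then 𝔑(π') ≥ |B_i|·|B_j|·𝔑(π), with equality if and only if both B_i and B_j are singletons. -/
variable {X : Type*} [Fintype X] [DecidableEq X]

/-- The atom of the partition lattice whose only nonsingleton block is `{x, y}`. -/
def pairSetoid (x y : X) : Setoid X where
  r a b := a = b ∨ (a = x ∧ b = y) ∨ (a = y ∧ b = x)
  iseqv := by
    refine ⟨fun a => Or.inl rfl, ?_, ?_⟩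
    · intro a b h; tauto
    · intro a b c h1 h2; aesop

/-- `S` is an atomic decomposition of the partition `π`. -/
def IsAtomicDecomp (π : Setoid X) (S : Set (Setoid X)) : Prop :=
  (∀ a ∈ S, IsAtom a) ∧ sSup S = π

/-- `S` is a minimal atomic decomposition of `π`. -/
def IsMinAtomicDecomp (π : Setoid X) (S : Set (Setoid X)) : Prop :=
  IsAtomicDecomp π S ∧ ∀ T ⊂ S, ¬ IsAtomicDecomp π T

/-- `𝔑 π`: the number of minimal atomic decompositions of `π`. -/
noncomputable def numMinDecomp (π : Setoid X) : ℕ :=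
  {S | IsMinAtomicDecomp π S}.ncard

/-- The graph on `X` whose edges are the nonsingleton blocks of the atoms in `S`. -/
def atomGraph (S : Set (Setoid X)) : SimpleGraph X where
  Adj a b := a ≠ b ∧ pairSetoid a b ∈ S
  symm := by
    constructor
    intro a b ⟨h1, h2⟩
    refine ⟨h1.symm, ?_⟩
    have h : pairSetoid b a = pairSetoid a b := by
      apply Setoid.ext; intro u v
      show _ ∨ _ ↔ _ ∨ _; tauto
    rw [h]; exact h2
  loopless := by constructor; intro a ⟨h, _⟩; exact h rfl

instance : Finite (Setoid X) :=
  Finite.of_injective (fun s : Setoid X => s.r) fun a b h =>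
    Setoid.ext fun x y => iff_of_eq (congrFun (congrFun h x) y)

set_option linter.unusedSectionVars false
set_option linter.unusedVariables false

lemma pair_rel_iff {x y a b : X} :
    pairSetoid x y a b ↔ a = b ∨ (a = x ∧ b = y) ∨ (a = y ∧ b = x) := Iff.rfl

lemma pair_rel_self {x y : X} : pairSetoid x y x y := Or.inr (Or.inl ⟨rfl, rfl⟩)

lemma pair_comm (x y : X) : pairSetoid x y = pairSetoid y x := by
  apply Setoid.ext; intro u v
  show _ ∨ _ ↔ _ ∨ _; tauto

lemma pair_le_iff {x y : X} {σ : Setoid X} : pairSetoid x y ≤ σ ↔ σ x y := by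
  constructor
  · intro h; exact h pair_rel_self
  · intro h; intro a b hab
    rcases hab with rfl | ⟨rfl, rfl⟩ | ⟨rfl, rfl⟩
    · exact σ.refl _
    · exact h
    · exact σ.symm h

lemma pair_ne_bot {x y : X} (h : x ≠ y) : pairSetoid x y ≠ ⊥ := by
  intro e
  have h2 : (⊥ : Setoid X) x y := e ▸ pair_rel_self
  exact h h2

lemma exists_rel_of_ne_bot {b : Setoid X} (h : b ≠ ⊥) : ∃ u v, u ≠ v ∧ b u v := by
  by_contra hc
  push_neg at hc
  apply h
  apply le_antisymm _ bot_le
  intro u v huv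
  by_cases he : u = v
  · exact he ▸ (⊥ : Setoid X).refl u
  · exact absurd huv (hc u v he)

lemma eq_pair_of_rel {a : Setoid X} {u v : X} (hne : u ≠ v) (h : IsAtom a) (hr : a u v) :
    a = pairSetoid u v := by
  have hle : pairSetoid u v ≤ a := pair_le_iff.2 hr
  rcases eq_or_lt_of_le hle with he | hlt
  · exact he.symm
  · exact absurd (h.2 _ hlt) (pair_ne_bot hne)

lemma isAtom_pair {x y : X} (h : x ≠ y) : IsAtom (pairSetoid x y) := by
  refine ⟨pair_ne_bot h, ?_⟩
  intro b hb
  by_contra hb0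
  obtain ⟨u, v, huv, hr⟩ := exists_rel_of_ne_bot hb0
  have : pairSetoid x y u v := hb.le hr
  have hxy : b x y := by
    rcases this with rfl | ⟨hu, hv⟩ | ⟨hu, hv⟩
    · exact absurd rfl huv
    · exact hu ▸ hv ▸ hr
    · exact b.symm (hu ▸ hv ▸ hr)
  exact hb.ne (le_antisymm hb.le (pair_le_iff.2 hxy))

lemma atom_eq_pair {a : Setoid X} (h : IsAtom a) : ∃ x y, x ≠ y ∧ a = pairSetoid x y := by
  obtain ⟨u, v, huv, hr⟩ := exists_rel_of_ne_bot h.1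
  exact ⟨u, v, huv, eq_pair_of_rel huv h hr⟩

/-- Trichotomy for joining with a pair atom. -/
lemma sup_pair_rel {σ : Setoid X} {x y p q : X} (h : (σ ⊔ pairSetoid x y) p q) :
    σ p q ∨ (σ p x ∧ σ y q) ∨ (σ p y ∧ σ x q) := by
  rw [Setoid.sup_eq_eqvGen] at h
  change Relation.EqvGen _ p q at h
  induction h with
  | rel a b hab =>
    rcases hab with h' | h'
    · exact Or.inl h'
    · rcases h' with rfl | ⟨rfl, rfl⟩ | ⟨rfl, rfl⟩
      · exact Or.inl (σ.refl _)
      · exact Or.inr (Or.inl ⟨σ.refl _, σ.refl _⟩)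
      · exact Or.inr (Or.inr ⟨σ.refl _, σ.refl _⟩)
  | refl a => exact Or.inl (σ.refl a)
  | symm a b _ ih =>
    rcases ih with h' | ⟨h1, h2⟩ | ⟨h1, h2⟩
    · exact Or.inl (σ.symm h')
    · exact Or.inr (Or.inr ⟨σ.symm h2, σ.symm h1⟩)
    · exact Or.inr (Or.inl ⟨σ.symm h2, σ.symm h1⟩)
  | trans a b c _ _ ih1 ih2 =>
    rcases ih1 with h1 | ⟨h1, h2⟩ | ⟨h1, h2⟩ <;>
      rcases ih2 with h3 | ⟨h3, h4⟩ | ⟨h3, h4⟩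
    · exact Or.inl (σ.trans h1 h3)
    · exact Or.inr (Or.inl ⟨σ.trans h1 h3, h4⟩)
    · exact Or.inr (Or.inr ⟨σ.trans h1 h3, h4⟩)
    · exact Or.inr (Or.inl ⟨h1, σ.trans h2 h3⟩)
    · exact Or.inl (σ.trans h1 (σ.trans (σ.symm (σ.trans h2 h3)) h4))
    · exact Or.inl (σ.trans h1 h4)
    · exact Or.inr (Or.inr ⟨h1, σ.trans h2 h3⟩)
    · exact Or.inl (σ.trans h1 h4)
    · exact Or.inl (σ.trans h1 (σ.trans (σ.symm (σ.trans h2 h3)) h4))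

/-- From a related pair under `sSup S`, extract a first step. -/
lemma sSup_rel_step {S : Set (Setoid X)} {p q : X} (h : sSup S p q) :
    p = q ∨ ((∃ a ∈ S, ∃ z, z ≠ p ∧ a p z) ∧ (∃ a ∈ S, ∃ z, z ≠ q ∧ a q z)) := by
  rw [Setoid.sSup_eq_eqvGen] at h
  change Relation.EqvGen _ p q at h
  induction h with
  | rel a b hab =>
    obtain ⟨r, hr, hab⟩ := hab
    by_cases he : a = b
    · exact Or.inl he
    · exact Or.inr ⟨⟨r, hr, b, Ne.symm he, hab⟩, ⟨r, hr, a, he, r.symm hab⟩⟩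
  | refl a => exact Or.inl rfl
  | symm a b _ ih =>
    rcases ih with rfl | ⟨h1, h2⟩
    · exact Or.inl rfl
    · exact Or.inr ⟨h2, h1⟩
  | trans a b c _ _ ih1 ih2 =>
    rcases ih1 with rfl | ⟨h1, h2⟩
    · exact ih2
    · rcases ih2 with rfl | ⟨h3, h4⟩
      · exact Or.inr ⟨h1, h2⟩
      · exact Or.inr ⟨h1, h4⟩

lemma exists_touch {S : Set (Setoid X)} {p q : X} (h : sSup S p q) (hne : p ≠ q) :
    ∃ a ∈ S, ∃ z, z ≠ p ∧ a p z :=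
  ((sSup_rel_step h).resolve_left hne).1

lemma class_rel {π : Setoid X} {B : Set X} (hB : B ∈ π.classes) {u v : X} (hu : u ∈ B) :
    π u v ↔ v ∈ B := by
  obtain ⟨c, rfl⟩ := hB
  exact ⟨fun h => π.trans (π.symm h) hu, fun h => π.trans hu (π.symm h)⟩

/-- Every setoid has an atomic decomposition. -/
lemma exists_decomp (π : Setoid X) : IsAtomicDecomp π {a | ∃ u v, u ≠ v ∧ π u v ∧ a = pairSetoid u v} := by
  constructor
  · rintro a ⟨u, v, huv, -, rfl⟩
    exact isAtom_pair huv
  · apply le_antisymm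
    · apply sSup_le
      rintro a ⟨u, v, huv, hr, rfl⟩
      exact pair_le_iff.2 hr
    · intro u v huv
      by_cases he : u = v
      · exact he ▸ Setoid.refl' _ u
      · have hm : pairSetoid u v ∈ {a : Setoid X | ∃ u v, u ≠ v ∧ π u v ∧ a = pairSetoid u v} :=
          ⟨u, v, he, huv, rfl⟩
        exact le_sSup hm pair_rel_self

lemma exists_min_decomp (π : Setoid X) : ∃ S, IsMinAtomicDecomp π S := by
  have key : ∀ n (S : Set (Setoid X)), S.ncard = n → IsAtomicDecomp π S →
      ∃ T, IsMinAtomicDecomp π T := by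
    intro n
    induction n using Nat.strong_induction_on with
    | _ n ih =>
      intro S hcard hS
      by_cases h : ∃ T ⊂ S, IsAtomicDecomp π T
      · obtain ⟨T, hT, hTd⟩ := h
        exact ih T.ncard (hcard ▸ Set.ncard_lt_ncard hT S.toFinite) T rfl hTd
      · push_neg at h
        exact ⟨S, hS, fun T hT hTd => (h T hT) hTd⟩
  exact key _ _ rfl (exists_decomp π)

lemma min_of_remove {π : Setoid X} {S : Set (Setoid X)} (hd : IsAtomicDecomp π S)
    (h : ∀ e ∈ S, sSup (S \ {e}) ≠ π) : IsMinAtomicDecomp π S := by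
  refine ⟨hd, ?_⟩
  intro T hT hTd
  obtain ⟨e, heS, heT⟩ := Set.exists_of_ssubset hT
  have hsub : T ⊆ S \ {e} := fun a ha => ⟨hT.subset ha, fun he => heT (he ▸ ha)⟩
  have h1 : π ≤ sSup (S \ {e}) := hTd.2 ▸ sSup_le_sSup hsub
  have h2 : sSup (S \ {e}) ≤ π := hd.2 ▸ sSup_le_sSup Set.diff_subset
  exact h e heS (le_antisymm h2 h1)

section main

variable {π π' : Setoid X} {Bi Bj : Set X}

lemma disj (hBi : Bi ∈ π.classes) (hBj : Bj ∈ π.classes) (hne : Bi ≠ Bj) :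
    ∀ z, z ∈ Bi → z ∈ Bj → False :=
  fun _ h1 h2 => hne (Setoid.eq_of_mem_classes hBi h1 hBj h2)

lemma rel_pi' (hmerge : π'.classes = insert (Bi ∪ Bj) (π.classes \ {Bi, Bj}))
    {x y : X} (hx : x ∈ Bi ∪ Bj) (hy : y ∈ Bi ∪ Bj) : π' x y := by
  have hC : Bi ∪ Bj ∈ π'.classes := hmerge ▸ Set.mem_insert _ _
  exact (Setoid.rel_iff_exists_classes π').2 ⟨_, hC, hx, hy⟩

lemma not_rel_pi (hBi : Bi ∈ π.classes) (hBj : Bj ∈ π.classes) (hne : Bi ≠ Bj)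
    {x y : X} (hx : x ∈ Bi) (hy : y ∈ Bj) : ¬ π x y :=
  fun h => disj hBi hBj hne y ((class_rel hBi hx).1 h) hy

lemma ne_of_mem_blocks (hBi : Bi ∈ π.classes) (hBj : Bj ∈ π.classes) (hne : Bi ≠ Bj)
    {x y : X} (hx : x ∈ Bi) (hy : y ∈ Bj) : x ≠ y :=
  fun e => disj hBi hBj hne x hx (e ▸ hy)

lemma sup_pair_eq (hcov : π ⋖ π') (hBi : Bi ∈ π.classes) (hBj : Bj ∈ π.classes)
    (hne : Bi ≠ Bj) (hmerge : π'.classes = insert (Bi ∪ Bj) (π.classes \ {Bi, Bj}))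
    {x y : X} (hx : x ∈ Bi) (hy : y ∈ Bj) : π ⊔ pairSetoid x y = π' := by
  have hle : π ⊔ pairSetoid x y ≤ π' :=
    sup_le hcov.1.le (pair_le_iff.2 (rel_pi' hmerge (Set.mem_union_left _ hx)
      (Set.mem_union_right _ hy)))
  have hlt : π < π ⊔ pairSetoid x y := by
    refine lt_of_le_of_ne le_sup_left fun he => ?_
    have : pairSetoid x y ≤ π := he ▸ le_sup_right
    exact not_rel_pi hBi hBj hne hx hy (this pair_rel_self)
  exact ((lt_or_eq_of_le hle).resolve_left (hcov.2 hlt))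

lemma insert_pair_min (hcov : π ⋖ π') (hBi : Bi ∈ π.classes) (hBj : Bj ∈ π.classes)
    (hne : Bi ≠ Bj) (hmerge : π'.classes = insert (Bi ∪ Bj) (π.classes \ {Bi, Bj}))
    {x y : X} (hx : x ∈ Bi) (hy : y ∈ Bj)
    {S : Set (Setoid X)} (hS : IsMinAtomicDecomp π S) :
    IsMinAtomicDecomp π' (insert (pairSetoid x y) S) := by
  set e := pairSetoid x y with he_def
  have hxy : x ≠ y := ne_of_mem_blocks hBi hBj hne hx hy
  have hnxy : ¬ π x y := not_rel_pi hBi hBj hne hx hy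
  have hsup : π ⊔ e = π' := sup_pair_eq hcov hBi hBj hne hmerge hx hy
  have heS : e ∉ S := by
    intro h
    have : e ≤ π := hS.1.2 ▸ le_sSup h
    exact hnxy (this pair_rel_self)
  have hdecomp : IsAtomicDecomp π' (insert e S) := by
    constructor
    · rintro a ha
      rcases Set.mem_insert_iff.1 ha with rfl | ha
      · exact isAtom_pair hxy
      · exact hS.1.1 a ha
    · rw [sSup_insert, hS.1.2, sup_comm, hsup]
  refine ⟨hdecomp, ?_⟩
  intro T hT hTd
  by_cases heT : e ∈ T
  · set T' := T \ {e} with hT'_def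
    have hins : insert e T' = T := by
      rw [hT'_def, Set.insert_diff_singleton, Set.insert_eq_of_mem heT]
    have hT'S : T' ⊆ S := by
      rintro a ⟨haT, hae⟩
      rcases Set.mem_insert_iff.1 (hT.subset haT) with rfl | h
      · exact absurd rfl hae
      · exact h
    have hT'ne : T' ≠ S := by
      intro h
      exact hT.ne (by rw [← hins, h])
    have hσ : sSup T' ≤ π := hS.1.2 ▸ sSup_le_sSup hT'S
    have hTsup : sSup T' ⊔ e = π' := by
      rw [← hTd.2, ← hins, sSup_insert, sup_comm]
    have hπσ : π ≤ sSup T' := by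
      intro u v huv
      have h1 : (sSup T' ⊔ e) u v := by
        rw [hTsup]; exact hcov.1.le huv
      rcases sup_pair_rel h1 with h' | ⟨h1', h2'⟩ | ⟨h1', h2'⟩
      · exact h'
      · exact absurd (π.trans (π.trans (π.symm (hσ h1')) huv) (π.symm (hσ h2'))) hnxy
      · exact absurd (π.trans (hσ h2') (π.trans (π.symm huv) (hσ h1'))) hnxy
    have hT'd : IsAtomicDecomp π T' :=
      ⟨fun a ha => hTd.1 a ha.1, le_antisymm hσ hπσ⟩
    exact hS.2 T' (ssubset_of_subset_of_ne hT'S hT'ne) hT'd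
  · have hTS : T ⊆ S := by
      intro a ha
      rcases Set.mem_insert_iff.1 (hT.subset ha) with rfl | h
      · exact absurd ha heT
      · exact h
    have hle : sSup T ≤ π := hS.1.2 ▸ sSup_le_sSup hTS
    rw [hTd.2] at hle
    exact hcov.lt.not_ge hle


lemma classes_nonempty {B : Set X} (hB : B ∈ π.classes) : B.Nonempty := by
  obtain ⟨c, rfl⟩ := hB
  exact ⟨c, π.refl c⟩

/-- When `|Bi| ≥ 2`, there is a minimal decomposition of `π'` that is not of the form
`insert (pairSetoid p q) S`. -/
lemma exists_outside (hcov : π ⋖ π') (hBi : Bi ∈ π.classes) (hBj : Bj ∈ π.classes)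
    (hne : Bi ≠ Bj) (hmerge : π'.classes = insert (Bi ∪ Bj) (π.classes \ {Bi, Bj}))
    (h2 : 1 < Bi.ncard) :
    ∃ U, IsMinAtomicDecomp π' U ∧
      ∀ p q (S : Set (Setoid X)), p ∈ Bi → q ∈ Bj → IsMinAtomicDecomp π S →
        insert (pairSetoid p q) S ≠ U := by
  obtain ⟨y, hy⟩ := classes_nonempty hBj
  obtain ⟨x1, x2, hx1, hx2, hx12⟩ := (Set.one_lt_ncard_iff Bi.toFinite).1 h2
  obtain ⟨S, hS⟩ := exists_min_decomp π
  have hrel12 : π x1 x2 := (class_rel hBi hx1).2 hx2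
  obtain ⟨a, haS, z, hz, harel⟩ := exists_touch (by rw [hS.1.2]; exact hrel12) hx12
  have haπ : a ≤ π := hS.1.2 ▸ le_sSup haS
  have huv : x1 ≠ z := Ne.symm hz
  have ha_eq : a = pairSetoid x1 z := eq_pair_of_rel huv (hS.1.1 a haS) harel
  set u := x1 with hu_def
  set v := z with hv_def
  have hu : u ∈ Bi := hx1
  have hv : v ∈ Bi := (class_rel hBi hx1).1 (haπ harel)
  -- basic facts
  have hπ'uy : π' u y := rel_pi' hmerge (Set.mem_union_left _ hu) (Set.mem_union_right _ hy)
  have hπ'vy : π' v y := rel_pi' hmerge (Set.mem_union_left _ hv) (Set.mem_union_right _ hy)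
  have hnuy : ¬ π u y := not_rel_pi hBi hBj hne hu hy
  have hnvy : ¬ π v y := not_rel_pi hBi hBj hne hv hy
  have huy : u ≠ y := ne_of_mem_blocks hBi hBj hne hu hy
  have hvy : v ≠ y := ne_of_mem_blocks hBi hBj hne hv hy
  set e1 := pairSetoid u y with he1_def
  set e2 := pairSetoid v y with he2_def
  have he12 : e1 ≠ e2 := by
    intro h
    have h3 : e2 u y := by rw [← h]; exact pair_rel_self
    rw [he2_def] at h3
    rcases h3 with h4 | ⟨h4, h5⟩ | ⟨h4, h5⟩
    · exact huy h4
    · exact huv h4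
    · exact huy h4
  set W := S \ {a} with hW_def
  have hWS : W ⊆ S := Set.diff_subset
  have hinsW : insert a W = S := by
    rw [hW_def, Set.insert_diff_singleton, Set.insert_eq_of_mem haS]
  set σ := sSup W with hσ_def
  have hσπ : σ ≤ π := hS.1.2 ▸ sSup_le_sSup hWS
  have hπaσ : a ⊔ σ = π := by rw [hσ_def, ← sSup_insert, hinsW, hS.1.2]
  have hWne : sSup W ≠ π := by
    intro h
    exact hS.2 W (Set.sdiff_singleton_ssubset.2 haS) ⟨fun b hb => hS.1.1 b hb.1, h⟩
  have hσuv : ¬ σ u v := by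
    intro h
    apply hWne
    have : a ≤ σ := ha_eq ▸ pair_le_iff.2 h
    rw [← hπaσ, sup_eq_right.2 this]
  have hσuy : ¬ σ u y := fun h => hnuy (hσπ h)
  have hσvy : ¬ σ v y := fun h => hnvy (hσπ h)
  have he1W : e1 ∉ W := fun h => hnuy ((hσπ.trans' (le_sSup h)) pair_rel_self)
  have he2W : e2 ∉ W := fun h => hnvy ((hσπ.trans' (le_sSup h)) pair_rel_self)
  set U := insert e1 (insert e2 W) with hU_def
  have hsupU : sSup U = π' := by
    rw [hU_def, sSup_insert, sSup_insert]
    apply le_antisymm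
    · exact sup_le (pair_le_iff.2 hπ'uy) (sup_le (pair_le_iff.2 hπ'vy) (hσπ.trans hcov.1.le))
    · rw [← sup_pair_eq hcov hBi hBj hne hmerge hu hy]
      refine sup_le ?_ le_sup_left
      rw [← hπaσ]
      refine sup_le ?_ (le_sup_of_le_right le_sup_right)
      rw [ha_eq]
      apply pair_le_iff.2
      have h1 : (e1 ⊔ (e2 ⊔ σ)) u y := (le_sup_left : e1 ≤ _) pair_rel_self
      have h2 : (e1 ⊔ (e2 ⊔ σ)) v y :=
        ((le_sup_of_le_right le_sup_left : e2 ≤ e1 ⊔ (e2 ⊔ σ))) pair_rel_self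
      exact Setoid.trans' _ h1 (Setoid.symm' _ h2)
  have hatoms : ∀ b ∈ U, IsAtom b := by
    intro b hb
    rcases Set.mem_insert_iff.1 hb with rfl | hb
    · exact isAtom_pair huy
    · rcases Set.mem_insert_iff.1 hb with rfl | hb
      · exact isAtom_pair hvy
      · exact hS.1.1 b (hWS hb)
  have hUmin : IsMinAtomicDecomp π' U := by
    apply min_of_remove ⟨hatoms, hsupU⟩
    intro f hf hcontra
    rcases Set.mem_insert_iff.1 hf with rfl | hf
    · -- f = e1
      have hUd : U \ {e1} = insert e2 W := by
        rw [hU_def]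
        apply Set.insert_diff_self_of_notMem
        intro h
        rcases Set.mem_insert_iff.1 h with h | h
        · exact he12 h
        · exact he1W h
      rw [hUd, sSup_insert, sup_comm] at hcontra
      have h1 : (σ ⊔ pairSetoid v y) u v := by
        rw [hcontra]
        exact rel_pi' hmerge (Set.mem_union_left _ hu) (Set.mem_union_left _ hv)
      rcases sup_pair_rel h1 with h' | ⟨h3, h4⟩ | ⟨h3, h4⟩
      · exact hσuv h'
      · exact hσuv h3
      · exact hσuy h3
    · rcases Set.mem_insert_iff.1 hf with rfl | hf
      · -- f = e2
        have hUd : U \ {e2} = insert e1 W := by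
          rw [hU_def, Set.insert_diff_of_notMem _ (by simpa using he12),
            Set.insert_diff_self_of_notMem he2W]
        rw [hUd, sSup_insert, sup_comm] at hcontra
        have h1 : (σ ⊔ pairSetoid u y) u v := by
          rw [hcontra]
          exact rel_pi' hmerge (Set.mem_union_left _ hu) (Set.mem_union_left _ hv)
        rcases sup_pair_rel h1 with h' | ⟨h3, h4⟩ | ⟨h3, h4⟩
        · exact hσuv h'
        · exact hσvy (Setoid.symm' _ h4)
        · exact hσuy h3
      · -- f = b ∈ W
        have hfa : f ≠ a := fun h => hf.2 (by simpa using h)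
        have hfS : f ∈ S := hWS hf
        set ρ := sSup (S \ {f}) with hρ_def
        have hρπ : ρ ≤ π := hS.1.2 ▸ sSup_le_sSup Set.diff_subset
        have haρ : a ≤ ρ := le_sSup ⟨haS, by simpa using Ne.symm hfa⟩
        have he1f : e1 ≠ f := fun h => he1W (h ▸ hf)
        have he2f : e2 ≠ f := fun h => he2W (h ▸ hf)
        have hUd : U \ {f} = insert e1 (insert e2 (W \ {f})) := by
          rw [hU_def, Set.insert_diff_of_notMem _ (by simpa using he1f),
            Set.insert_diff_of_notMem _ (by simpa using he2f)]
        have hless : sSup (U \ {f}) ≤ ρ ⊔ e1 := by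
          rw [hUd, sSup_insert, sSup_insert]
          refine sup_le le_sup_right (sup_le ?_ ?_)
          · -- e2 ≤ ρ ⊔ e1
            apply pair_le_iff.2
            have hvu : a v u := ha_eq ▸ Setoid.symm' _ pair_rel_self
            have h1 : (ρ ⊔ e1) v u := (haρ.trans le_sup_left) hvu
            have h2 : (ρ ⊔ e1) u y := (le_sup_right : e1 ≤ _) pair_rel_self
            exact Setoid.trans' _ h1 h2
          · refine le_trans (sSup_le_sSup ?_) le_sup_left
            intro c hc
            exact ⟨hWS hc.1, hc.2⟩
        have hπ'ρ : π' ≤ ρ ⊔ e1 := hcontra ▸ hless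
        have hπρ : π ≤ ρ := by
          intro p q hpq
          have h1 : (ρ ⊔ pairSetoid u y) p q := hπ'ρ (hcov.1.le hpq)
          rcases sup_pair_rel h1 with h' | ⟨h3, h4⟩ | ⟨h3, h4⟩
          · exact h'
          · exfalso
            have hpBi : p ∈ Bi := (class_rel hBi hu).1 (Setoid.symm' _ (hρπ h3))
            have hqBj : q ∈ Bj := (class_rel hBj hy).1 (hρπ h4)
            have hqBi : q ∈ Bi := (class_rel hBi hpBi).1 hpq
            exact disj hBi hBj hne q hqBi hqBj
          · exfalso
            have hpBj : p ∈ Bj := (class_rel hBj hy).1 (Setoid.symm' _ (hρπ h3))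
            have hqBi : q ∈ Bi := (class_rel hBi hu).1 (hρπ h4)
            have hqBj : q ∈ Bj := (class_rel hBj hpBj).1 hpq
            exact disj hBi hBj hne q hqBi hqBj
        exact hS.2 (S \ {f}) (Set.sdiff_singleton_ssubset.2 hfS)
          ⟨fun b hb => hS.1.1 b hb.1, le_antisymm hρπ hπρ⟩
  refine ⟨U, hUmin, ?_⟩
  intro p q S' hp hq hS' hEq
  have hnpq : ¬ π p q := not_rel_pi hBi hBj hne hp hq
  have he1U : e1 ∈ U := Set.mem_insert _ _
  have he2U : e2 ∈ U := Set.mem_insert_of_mem _ (Set.mem_insert _ _)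
  rw [← hEq] at he1U he2U
  by_cases hpq1 : pairSetoid p q = e1
  · rcases Set.mem_insert_iff.1 he2U with h | h
    · exact he12 (hpq1 ▸ h.symm)
    · exact hnvy ((hS'.1.2 ▸ le_sSup h : e2 ≤ π) pair_rel_self)
  · rcases Set.mem_insert_iff.1 he1U with h | h
    · exact hpq1 h.symm
    · exact hnuy ((hS'.1.2 ▸ le_sSup h : e1 ≤ π) pair_rel_self)


lemma surj_of_singletons (hcov : π ⋖ π') (hBi : Bi ∈ π.classes) (hBj : Bj ∈ π.classes)
    (hne : Bi ≠ Bj) (hmerge : π'.classes = insert (Bi ∪ Bj) (π.classes \ {Bi, Bj}))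
    {x0 y0 : X} (hBi1 : Bi = {x0}) (hBj1 : Bj = {y0})
    {U : Set (Setoid X)} (hU : IsMinAtomicDecomp π' U) :
    ∃ S, IsMinAtomicDecomp π S ∧ U = insert (pairSetoid x0 y0) S := by
  have hx0 : x0 ∈ Bi := hBi1 ▸ rfl
  have hy0 : y0 ∈ Bj := hBj1 ▸ rfl
  have hxy : x0 ≠ y0 := ne_of_mem_blocks hBi hBj hne hx0 hy0
  have hnxy : ¬ π x0 y0 := not_rel_pi hBi hBj hne hx0 hy0
  have hπ'xy : π' x0 y0 :=
    rel_pi' hmerge (Set.mem_union_left _ hx0) (Set.mem_union_right _ hy0)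
  set e0 := pairSetoid x0 y0 with he0_def
  have hC : Bi ∪ Bj ∈ π'.classes := hmerge ▸ Set.mem_insert _ _
  have he0U : e0 ∈ U := by
    obtain ⟨a, haU, z, hz, har⟩ := exists_touch (by rw [hU.1.2]; exact hπ'xy) hxy
    have haπ' : π' x0 z := (hU.1.2 ▸ le_sSup haU : a ≤ π') har
    have hzC : z ∈ Bi ∪ Bj := (class_rel hC (Set.mem_union_left _ hx0)).1 haπ'
    have hzy0 : z = y0 := by
      rw [hBi1, hBj1] at hzC
      rcases hzC with h | h
      · exact absurd h hz
      · exact h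
    have h5 := eq_pair_of_rel (Ne.symm hz) (hU.1.1 a haU) har
    rw [hzy0] at h5
    rw [he0_def, ← h5]
    exact haU
  set S := U \ {e0} with hS_def
  have he0S : e0 ∉ S := fun h => h.2 rfl
  have hins : insert e0 S = U := by
    rw [hS_def, Set.insert_diff_singleton, Set.insert_eq_of_mem he0U]
  have hσπ : sSup S ≤ π := by
    apply sSup_le
    intro b hb
    obtain ⟨w1, w2, hw, rfl⟩ := atom_eq_pair (hU.1.1 b hb.1)
    apply pair_le_iff.2
    have hb' : π' w1 w2 := (hU.1.2 ▸ le_sSup hb.1 : _ ≤ π') pair_rel_self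
    obtain ⟨C, hCc, h1C, h2C⟩ := (Setoid.rel_iff_exists_classes π').1 hb'
    rw [hmerge] at hCc
    rcases Set.mem_insert_iff.1 hCc with rfl | ⟨hCπ, _⟩
    · exfalso
      rw [hBi1, hBj1] at h1C h2C
      apply hb.2
      rcases h1C with h1 | h1 <;> rcases h2C with h2 | h2 <;>
        rw [Set.mem_singleton_iff] at h1 h2
      · exact absurd (h1.trans h2.symm) hw
      · rw [h1, h2]
        exact Set.mem_singleton_iff.2 he0_def.symm
      · rw [h1, h2, pair_comm]
        exact Set.mem_singleton_iff.2 he0_def.symm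
      · exact absurd (h1.trans h2.symm) hw
    · exact (Setoid.rel_iff_exists_classes π).2 ⟨C, hCπ, h1C, h2C⟩
  have hsupσ : sSup S ⊔ e0 = π' := by rw [← hU.1.2, ← hins, sSup_insert, sup_comm]
  have hπσ : π ≤ sSup S := by
    intro p q hpq
    have h1 : (sSup S ⊔ pairSetoid x0 y0) p q := by
      rw [← he0_def, hsupσ]
      exact hcov.1.le hpq
    rcases sup_pair_rel h1 with h' | ⟨h3, h4⟩ | ⟨h3, h4⟩
    · exact h'
    · exfalso
      have hp : p = x0 := by
        have := (class_rel hBi hx0).1 (Setoid.symm' _ (hσπ h3))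
        rwa [hBi1, Set.mem_singleton_iff] at this
      have hq : q = y0 := by
        have := (class_rel hBj hy0).1 (hσπ h4)
        rwa [hBj1, Set.mem_singleton_iff] at this
      exact hnxy (hp ▸ hq ▸ hpq)
    · exfalso
      have hp : p = y0 := by
        have := (class_rel hBj hy0).1 (Setoid.symm' _ (hσπ h3))
        rwa [hBj1, Set.mem_singleton_iff] at this
      have hq : q = x0 := by
        have := (class_rel hBi hx0).1 (hσπ h4)
        rwa [hBi1, Set.mem_singleton_iff] at this
      exact hnxy (Setoid.symm' _ (hp ▸ hq ▸ hpq))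
  have hSd : IsAtomicDecomp π S :=
    ⟨fun b hb => hU.1.1 b hb.1, le_antisymm hσπ hπσ⟩
  refine ⟨S, ⟨hSd, ?_⟩, hins.symm⟩
  intro T hT hTd
  apply hU.2 (insert e0 T)
  · constructor
    · rw [← hins]
      exact Set.insert_subset_insert hT.subset
    · intro hsub
      obtain ⟨c, hcS, hcT⟩ := Set.exists_of_ssubset hT
      have hcU : c ∈ insert e0 T := hsub (hins ▸ Set.mem_insert_of_mem _ hcS)
      rcases Set.mem_insert_iff.1 hcU with rfl | h
      · exact he0S hcS
      · exact hcT h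
  · constructor
    · intro b hb
      rcases Set.mem_insert_iff.1 hb with rfl | hb
      · exact isAtom_pair hxy
      · exact hSd.1 b (hT.subset hb)
    · rw [sSup_insert, hTd.2, sup_comm]
      exact sup_pair_eq hcov hBi hBj hne hmerge hx0 hy0

end main


lemma ncard_sprod {α β : Type*} (s : Set α) (t : Set β) :
    (s ×ˢ t).ncard = s.ncard * t.ncard := by
  rw [← Nat.card_coe_set_eq, ← Nat.card_coe_set_eq, ← Nat.card_coe_set_eq]
  rw [Nat.card_congr (Equiv.Set.prod s t), Nat.card_prod]


/-- If `π'` covers `π` by merging blocks `Bi` and `Bj` of `π`, then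
`𝔑(π') ≥ |Bi|·|Bj|·𝔑(π)`, with equality iff both `Bi` and `Bj` are singletons. -/
theorem numMinDecomp_cover (π π' : Setoid X) (Bi Bj : Set X)
    (hcov : π ⋖ π') (hBi : Bi ∈ π.classes) (hBj : Bj ∈ π.classes) (hne : Bi ≠ Bj)
    (hmerge : π'.classes = insert (Bi ∪ Bj) (π.classes \ {Bi, Bj})) :
    Set.ncard Bi * Set.ncard Bj * numMinDecomp π ≤ numMinDecomp π' ∧
      (numMinDecomp π' = Set.ncard Bi * Set.ncard Bj * numMinDecomp π ↔
        Set.ncard Bi = 1 ∧ Set.ncard Bj = 1) := by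
  classical
  set M : Set (Set (Setoid X)) := {S | IsMinAtomicDecomp π S} with hM
  set M' : Set (Set (Setoid X)) := {S | IsMinAtomicDecomp π' S} with hM'
  set f : (X × X) × Set (Setoid X) → Set (Setoid X) :=
    fun p => insert (pairSetoid p.1.1 p.1.2) p.2 with hf
  set D : Set ((X × X) × Set (Setoid X)) := (Bi ×ˢ Bj) ×ˢ M with hD
  have hmem : ∀ p ∈ D, p.1.1 ∈ Bi ∧ p.1.2 ∈ Bj ∧ IsMinAtomicDecomp π p.2 := by
    intro p hp
    exact ⟨(Set.mem_prod.1 (Set.mem_prod.1 hp).1).1,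
      (Set.mem_prod.1 (Set.mem_prod.1 hp).1).2, (Set.mem_prod.1 hp).2⟩
  have himg : f '' D ⊆ M' := by
    rintro _ ⟨p, hp, rfl⟩
    obtain ⟨hx, hy, hS⟩ := hmem _ hp
    exact insert_pair_min hcov hBi hBj hne hmerge hx hy hS
  have hinj : Set.InjOn f D := by
    rintro ⟨⟨x, y⟩, S⟩ hp ⟨⟨x', y'⟩, S'⟩ hp' hEq
    obtain ⟨hx, hy, hS⟩ := hmem _ hp
    obtain ⟨hx', hy', hS'⟩ := hmem _ hp'
    simp only [hf] at hEq
    have hnS : pairSetoid x y ∉ S :=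
      fun h => (not_rel_pi hBi hBj hne hx hy) ((hS.1.2 ▸ le_sSup h : _ ≤ π) pair_rel_self)
    have hnS' : pairSetoid x' y' ∉ S' :=
      fun h => (not_rel_pi hBi hBj hne hx' hy') ((hS'.1.2 ▸ le_sSup h : _ ≤ π) pair_rel_self)
    have hee : pairSetoid x y = pairSetoid x' y' := by
      by_contra hne'
      have h1 : pairSetoid x y ∈ insert (pairSetoid x' y') S' := hEq ▸ Set.mem_insert _ _
      rcases Set.mem_insert_iff.1 h1 with h | h
      · exact hne' h
      · exact (not_rel_pi hBi hBj hne hx hy) ((hS'.1.2 ▸ le_sSup h : _ ≤ π) pair_rel_self)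
    have hxx : x = x' ∧ y = y' := by
      have h1 : pairSetoid x' y' x y := by rw [← hee]; exact pair_rel_self
      rcases h1 with h | ⟨ha, hb⟩ | ⟨ha, hb⟩
      · exact absurd h (ne_of_mem_blocks hBi hBj hne hx hy)
      · exact ⟨ha, hb⟩
      · exact (disj hBi hBj hne x hx (by rw [ha]; exact hy')).elim
    obtain ⟨rfl, rfl⟩ := hxx
    have hSS : S = S' := by
      rw [← Set.insert_diff_self_of_notMem hnS, ← Set.insert_diff_self_of_notMem hnS', hEq]
    rw [hSS]
  have hDcard : D.ncard = Bi.ncard * Bj.ncard * numMinDecomp π := by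
    rw [hD, ncard_sprod, ncard_sprod]
    rfl
  have hkey : (f '' D).ncard = Bi.ncard * Bj.ncard * numMinDecomp π := by
    rw [Set.ncard_image_of_injOn hinj, hDcard]
  have hfin : M'.Finite := Set.toFinite _
  have hM'card : numMinDecomp π' = M'.ncard := rfl
  have hle : Bi.ncard * Bj.ncard * numMinDecomp π ≤ numMinDecomp π' := by
    rw [← hkey, hM'card]
    exact Set.ncard_le_ncard himg hfin
  refine ⟨hle, ?_, ?_⟩
  · intro heq
    by_contra hcon
    have hBile : 0 < Bi.ncard := (Set.ncard_pos Bi.toFinite).2 (classes_nonempty hBi)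
    have hBjle : 0 < Bj.ncard := (Set.ncard_pos Bj.toFinite).2 (classes_nonempty hBj)
    have h12 : 1 < Bi.ncard ∨ 1 < Bj.ncard := by
      by_contra h
      push_neg at h
      exact hcon ⟨by omega, by omega⟩
    have strict : ∃ U, IsMinAtomicDecomp π' U ∧ U ∉ f '' D := by
      rcases h12 with h' | h'
      · obtain ⟨U, hU, hprop⟩ := exists_outside hcov hBi hBj hne hmerge h'
        refine ⟨U, hU, ?_⟩
        rintro ⟨⟨⟨x, y⟩, S⟩, hp, hfeq⟩
        obtain ⟨hx, hy, hS⟩ := hmem _ hp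
        exact hprop x y S hx hy hS hfeq
      · have hmerge' : π'.classes = insert (Bj ∪ Bi) (π.classes \ {Bj, Bi}) := by
          rw [hmerge, Set.union_comm, Set.pair_comm]
        obtain ⟨U, hU, hprop⟩ := exists_outside hcov hBj hBi hne.symm hmerge' h'
        refine ⟨U, hU, ?_⟩
        rintro ⟨⟨⟨x, y⟩, S⟩, hp, hfeq⟩
        obtain ⟨hx, hy, hS⟩ := hmem _ hp
        refine hprop y x S hy hx hS ?_
        rw [pair_comm]
        exact hfeq
    obtain ⟨U, hU, hUnot⟩ := strict
    have hss : f '' D ⊂ M' := ⟨himg, fun hsub => hUnot (hsub hU)⟩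
    have hlt := Set.ncard_lt_ncard hss hfin
    rw [hkey, ← hM'card] at hlt
    omega
  · rintro ⟨h1, h2⟩
    obtain ⟨x0, hx0⟩ := Set.ncard_eq_one.1 h1
    obtain ⟨y0, hy0⟩ := Set.ncard_eq_one.1 h2
    have hsub : M' ⊆ f '' D := by
      intro U hU
      obtain ⟨S, hS, hUe⟩ := surj_of_singletons hcov hBi hBj hne hmerge hx0 hy0 hU
      refine ⟨((x0, y0), S), ?_, hUe.symm⟩
      exact Set.mem_prod.2 ⟨Set.mem_prod.2 ⟨hx0 ▸ rfl, hy0 ▸ rfl⟩, hS⟩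
    have heq2 : f '' D = M' := Set.Subset.antisymm himg hsub
    rw [hM'card, ← heq2, hkey]
end

section
/- The function 𝔑 counting minimal atomic decompositions is monotone on the partition lattice: if π ≤ π' in refinement order then 𝔑(π) ≤ 𝔑(π'). -/
variable {X : Type*} [Fintype X] [DecidableEq X]

/- ### Auxiliary lemmas -/

lemma pairSetoid_rel' {x y a b : X} :
    pairSetoid x y a b ↔ (a = b ∨ (a = x ∧ b = y) ∨ (a = y ∧ b = x)) := Iff.rfl

lemma pairSetoid_le {x y : X} {ρ : Setoid X} : pairSetoid x y ≤ ρ ↔ ρ x y := by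
  constructor
  · intro h; exact h (Or.inr (Or.inl ⟨rfl, rfl⟩))
  · intro h a b hab
    rcases hab with rfl | ⟨rfl, rfl⟩ | ⟨rfl, rfl⟩
    · exact ρ.refl' a
    · exact h
    · exact ρ.symm' h

lemma setoid_ne_bot {b : Setoid X} (hb : b ≠ ⊥) : ∃ p q : X, p ≠ q ∧ b p q := by
  by_contra hc
  push_neg at hc
  apply hb
  apply Setoid.ext
  intro u v
  constructor
  · intro huv
    show u = v
    by_contra hne
    exact hc u v hne huv
  · intro huv
    have he : u = v := huv
    rw [he]

lemma pairSetoid_isAtom {x y : X} (hxy : x ≠ y) : IsAtom (pairSetoid x y) := by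
  constructor
  · intro hbot
    have h1 : pairSetoid x y x y := Or.inr (Or.inl ⟨rfl, rfl⟩)
    rw [hbot] at h1
    exact hxy h1
  · intro b hb
    by_contra hbne
    obtain ⟨p, q, hpq, hrel⟩ := setoid_ne_bot hbne
    have hle : b ≤ pairSetoid x y := hb.1
    have : pairSetoid x y p q := hle hrel
    have hxyb : pairSetoid x y ≤ b := by
      rw [pairSetoid_le]
      rcases this with rfl | ⟨rfl, rfl⟩ | ⟨rfl, rfl⟩
      · exact absurd rfl hpq
      · exact hrel
      · exact b.symm' hrel
    exact hb.2 hxyb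

lemma isAtom_eq_pairSetoid {a : Setoid X} (ha : IsAtom a) :
    ∃ p q : X, p ≠ q ∧ a = pairSetoid p q := by
  obtain ⟨p, q, hpq, hrel⟩ := setoid_ne_bot ha.1
  refine ⟨p, q, hpq, ?_⟩
  have hle : pairSetoid p q ≤ a := pairSetoid_le.mpr hrel
  have hne : pairSetoid p q ≠ ⊥ := (pairSetoid_isAtom hpq).1
  rcases lt_or_eq_of_le hle with hlt | heq
  · exact absurd (ha.2 _ hlt) hne
  · exact heq.symm

/-- Canonical representative of the class of `u` under `ρ`. -/
noncomputable def srep (ρ : Setoid X) (u : X) : X := (Quotient.mk ρ u).out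

lemma srep_rel (ρ : Setoid X) (u : X) : ρ u (srep ρ u) :=
  Quotient.exact (Quotient.out_eq (Quotient.mk ρ u)).symm

lemma srep_eq_of_rel {ρ : Setoid X} {u v : X} (h : ρ u v) : srep ρ u = srep ρ v := by
  unfold srep
  rw [Quotient.sound h]

lemma srep_idem (ρ : Setoid X) (u : X) : srep ρ (srep ρ u) = srep ρ u :=
  (srep_eq_of_rel (srep_rel ρ u)).symm

lemma rel_of_srep_eq {ρ : Setoid X} {u v : X} (h : srep ρ u = srep ρ v) : ρ u v := by
  have h1 := srep_rel ρ u
  have h2 := srep_rel ρ v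
  rw [h] at h1
  exact ρ.trans' h1 (ρ.symm' h2)

instance inst_s12 : Finite (Setoid X) :=
  Finite.of_injective (fun s : Setoid X => (⇑s : X → X → Prop))
    (fun a b h => Setoid.ext fun x y => by rw [show ⇑a = ⇑b from h])

/-- `𝔑` is monotone on the partition lattice. -/
theorem numMinDecomp_monotone (π π' : Setoid X) (h : π ≤ π') :
    numMinDecomp π ≤ numMinDecomp π' := by
  classical
  -- The fixed set of "star" atoms connecting the canonical representatives of the
  -- π-blocks inside each π'-block.
  set E : Set (Setoid X) :=
    {t | ∃ d : X, srep π d ≠ srep π (srep π' d) ∧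
      t = pairSetoid (srep π d) (srep π (srep π' d))} with hE
  have hπ'E : ∀ e ∈ E, e ≤ π' := by
    rintro e ⟨d, hd, rfl⟩
    rw [pairSetoid_le]
    have h1 : π' (srep π d) d := Setoid.symm' _ (h (srep_rel π d))
    have h2 : π' d (srep π' d) := srep_rel π' d
    have h3 : π' (srep π' d) (srep π (srep π' d)) := h (srep_rel π (srep π' d))
    exact Setoid.trans' _ (Setoid.trans' _ h1 h2) h3
  -- the main step: adjoining `E` to a minimal decomposition of π gives one of π'
  have hmain : ∀ S, IsMinAtomicDecomp π S → IsMinAtomicDecomp π' (S ∪ E) := by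
    intro S hS
    obtain ⟨⟨hatoms, hsup⟩, hmin⟩ := hS
    have hSle : ∀ s ∈ S, s ≤ π := by
      intro s hs; rw [← hsup]; exact le_sSup hs
    refine ⟨⟨?_, ?_⟩, ?_⟩
    · rintro a (ha | ⟨d, hd, rfl⟩)
      · exact hatoms a ha
      · exact pairSetoid_isAtom hd
    · -- sSup (S ∪ E) = π'
      apply le_antisymm
      · apply sSup_le
        rintro s (hs | hsE)
        · exact le_trans (hSle s hs) h
        · exact hπ'E s hsE
      · intro a b hab
        have hPiSup : π ≤ sSup (S ∪ E) := by
          rw [← hsup]; exact sSup_le_sSup Set.subset_union_left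
        have key : ∀ u : X, sSup (S ∪ E) u (srep π (srep π' u)) := by
          intro u
          have h1 : sSup (S ∪ E) u (srep π u) := hPiSup (srep_rel π u)
          by_cases hc : srep π u = srep π (srep π' u)
          · rw [← hc]; exact h1
          · have hmem : pairSetoid (srep π u) (srep π (srep π' u)) ∈ S ∪ E :=
              Or.inr ⟨u, hc, rfl⟩
            have h2 : sSup (S ∪ E) (srep π u) (srep π (srep π' u)) :=
              (le_sSup hmem) (Or.inr (Or.inl ⟨rfl, rfl⟩))
            exact Setoid.trans' _ h1 h2
        have hgab : srep π' a = srep π' b := srep_eq_of_rel hab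
        have h3 := key a
        have h4 := key b
        rw [hgab] at h3
        exact Setoid.trans' _ h3 (Setoid.symm' _ h4)
    · -- minimality
      rintro T hT ⟨hTatoms, hTsup⟩
      obtain ⟨x, hxmem, hxT⟩ := Set.exists_of_ssubset hT
      have hTsub := hT.subset
      rcases hxmem with hxS | hxE
      · -- removed atom is in S : use minimality of S
        obtain ⟨p, q, hpq, hxeq⟩ := isAtom_eq_pairSetoid (hatoms x hxS)
        set σ := sSup (S \ {x}) with hσ
        have hσπ : σ ≤ π := by
          rw [← hsup]; exact sSup_le_sSup Set.diff_subset
        have hσne : σ ≠ π := by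
          intro hc
          exact hmin (S \ {x}) (Set.sdiff_singleton_ssubset.mpr hxS)
            ⟨fun a ha => hatoms a ha.1, hc⟩
        have hxpq : x p q := by rw [hxeq]; exact Or.inr (Or.inl ⟨rfl, rfl⟩)
        have hπpq : π p q := hSle x hxS hxpq
        have hσpq : ¬ σ p q := by
          intro hc
          apply hσne
          apply le_antisymm hσπ
          rw [← hsup]
          apply sSup_le
          intro s hs
          by_cases hsx : s = x
          · rw [hsx, hxeq]; exact pairSetoid_le.mpr hc
          · exact le_sSup ⟨hs, hsx⟩
        obtain ⟨c, hcp, hcfp, hcne⟩ :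
            ∃ c : X, π c p ∧ ¬ σ c (srep π p) ∧ ¬ (σ p c ↔ σ q c) := by
          by_cases hps : σ p (srep π p)
          · refine ⟨q, Setoid.symm' _ hπpq, ?_, ?_⟩
            · intro hc; exact hσpq (Setoid.trans' _ hps (Setoid.symm' _ hc))
            · intro hiff; exact hσpq (hiff.mpr (Setoid.refl' _ q))
          · refine ⟨p, Setoid.refl' _ p, hps, ?_⟩
            intro hiff
            exact hσpq (Setoid.symm' _ (hiff.mp (Setoid.refl' _ p)))
        set ρ : Setoid X :=
          ⟨fun u v => π' u v ∧ (σ u c ↔ σ v c),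
            ⟨fun u => ⟨Setoid.refl' _ u, Iff.rfl⟩,
             fun hab => ⟨Setoid.symm' _ hab.1, hab.2.symm⟩,
             fun h1 h2 => ⟨Setoid.trans' _ h1.1 h2.1, h1.2.trans h2.2⟩⟩⟩ with hρ
        have hTρ : sSup T ≤ ρ := by
          apply sSup_le
          intro t ht
          rcases hTsub ht with htS | htE
          · have htx : t ≠ x := fun e => hxT (e ▸ ht)
            have htσ : t ≤ σ := le_sSup ⟨htS, htx⟩
            intro u v huv
            exact ⟨h (hσπ (htσ huv)),
              ⟨fun h1 => Setoid.trans' _ (Setoid.symm' _ (htσ huv)) h1,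
               fun h1 => Setoid.trans' _ (htσ huv) h1⟩⟩
          · have htπ' := hπ'E t htE
            obtain ⟨d, hd, hteq⟩ := htE
            subst hteq
            rw [pairSetoid_le]
            have hside : ∀ u : X, srep π u = u → ¬ σ u c := by
              intro u hu hσuc
              have hπuc : π u c := hσπ hσuc
              have hup : π u p := Setoid.trans' _ hπuc hcp
              have heq : srep π u = srep π p := srep_eq_of_rel hup
              rw [hu] at heq
              rw [heq] at hσuc
              exact hcfp (Setoid.symm' _ hσuc)
            exact ⟨pairSetoid_le.mp htπ',
              iff_of_false (hside _ (srep_idem π d)) (hside _ (srep_idem π (srep π' d)))⟩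
        rw [hTsup] at hTρ
        exact hcne (hTρ (h hπpq)).2
      · -- removed atom is in E
        have hxπ' := hπ'E x hxE
        obtain ⟨c0, hc0, hxeq⟩ := hxE
        set ρ : Setoid X :=
          ⟨fun u v => π' u v ∧ (π u c0 ↔ π v c0),
            ⟨fun u => ⟨Setoid.refl' _ u, Iff.rfl⟩,
             fun hab => ⟨Setoid.symm' _ hab.1, hab.2.symm⟩,
             fun h1 h2 => ⟨Setoid.trans' _ h1.1 h2.1, h1.2.trans h2.2⟩⟩⟩ with hρ
        have hTρ : sSup T ≤ ρ := by
          apply sSup_le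
          intro t ht
          rcases hTsub ht with htS | htE
          · intro u v huv
            have hπuv := hSle t htS huv
            exact ⟨h hπuv,
              ⟨fun h1 => Setoid.trans' _ (Setoid.symm' _ hπuv) h1,
               fun h1 => Setoid.trans' _ hπuv h1⟩⟩
          · have htπ' := hπ'E t htE
            obtain ⟨d, hd, hteq⟩ := htE
            subst hteq
            rw [pairSetoid_le]
            have hL : ¬ π (srep π d) c0 := by
              intro h1
              apply hxT
              have hdc : π d c0 := Setoid.trans' _ (srep_rel π d) h1
              have hd' : srep π d = srep π c0 := srep_eq_of_rel hdc
              have hg' : srep π' d = srep π' c0 := srep_eq_of_rel (h hdc)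
              have hx : pairSetoid (srep π d) (srep π (srep π' d)) = x := by
                rw [hxeq, hd', hg']
              rw [← hx]
              exact ht
            have hR : ¬ π (srep π (srep π' d)) c0 := by
              intro h1
              have h2 : π (srep π' d) c0 :=
                Setoid.trans' _ (srep_rel π (srep π' d)) h1
              have h3 : π' d c0 := Setoid.trans' _ (srep_rel π' d) (h h2)
              have h4 : srep π' d = srep π' c0 := srep_eq_of_rel h3
              rw [h4] at h1
              have h5 : srep π (srep π (srep π' c0)) = srep π c0 := srep_eq_of_rel h1
              rw [srep_idem] at h5
              exact hc0 h5.symm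
            exact ⟨pairSetoid_le.mp htπ', iff_of_false hL hR⟩
        rw [hTsup] at hTρ
        have hfin := hTρ (srep_rel π' c0)
        have h6 : π (srep π' c0) c0 := hfin.2.mp (Setoid.refl' _ c0)
        exact hc0 (srep_eq_of_rel (Setoid.symm' _ h6))
  -- disjointness, for injectivity
  have hdisj : ∀ S, IsMinAtomicDecomp π S → ∀ a, a ∈ S → a ∉ E := by
    rintro S hS a haS ⟨d, hd, rfl⟩
    have hle : pairSetoid (srep π d) (srep π (srep π' d)) ≤ π := by
      exact le_of_le_of_eq (le_sSup haS) hS.1.2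
    have h1 := pairSetoid_le.mp hle
    have h2 := srep_eq_of_rel h1
    rw [srep_idem, srep_idem] at h2
    exact hd h2
  -- count
  unfold numMinDecomp
  apply Set.ncard_le_ncard_of_injOn (fun S => S ∪ E)
  · intro S hS
    exact hmain S hS
  · intro S1 h1 S2 h2 he
    have he' : S1 ∪ E = S2 ∪ E := he
    have key : ∀ S, IsMinAtomicDecomp π S → S = (S ∪ E) \ E := by
      intro S hS
      ext a
      simp only [Set.mem_diff, Set.mem_union]
      constructor
      · intro ha
        exact ⟨Or.inl ha, hdisj S hS a ha⟩
      · rintro ⟨ha | haE, hnE⟩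
        · exact ha
        · exact absurd haE hnE
    rw [key S1 h1, key S2 h2, he']
end

section
/- The partition lattice Π(X) of a finite set X with |X| ≥ 3 is not half-factorial with respect to atomic decompositions without repetition: there exists a partition admitting two atomic decompositions (sets of atoms with join π) of different cardinalities. -/
variable {X : Type*} [Fintype X] [DecidableEq X]

lemma pairSetoid_rel (x y : X) : (pairSetoid x y).r x y := Or.inr (Or.inl ⟨rfl, rfl⟩)

lemma pairSetoid_inj {x y u v : X} (hxy : x ≠ y)
    (h : pairSetoid x y = pairSetoid u v) : (x = u ∧ y = v) ∨ (x = v ∧ y = u) := by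
  have : (pairSetoid u v).r x y := h ▸ pairSetoid_rel x y
  rcases this with h' | h' | h'
  · exact absurd h' hxy
  · exact Or.inl h'
  · exact Or.inr h'

/-- For `|X| ≥ 3`, the partition lattice is not half-factorial: some partition
admits two atomic decompositions of different cardinalities. -/
theorem not_half_factorial (h : 3 ≤ Fintype.card X) :
    ∃ (π : Setoid X) (S S' : Set (Setoid X)),
      IsAtomicDecomp π S ∧ IsAtomicDecomp π S' ∧ S.ncard ≠ S'.ncard := by
  obtain ⟨x, y, z, hxy, hxz, hyz⟩ := Fintype.two_lt_card_iff.mp h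
  set a : Setoid X := pairSetoid x y with ha
  set b : Setoid X := pairSetoid y z with hb
  set c : Setoid X := pairSetoid x z with hc
  set S : Set (Setoid X) := {a, b} with hS
  set S' : Set (Setoid X) := {a, b, c} with hS'
  refine ⟨sSup S, S, S', ⟨?_, rfl⟩, ⟨?_, ?_⟩, ?_⟩
  · rintro t (rfl | rfl)
    · exact pairSetoid_isAtom hxy
    · exact pairSetoid_isAtom hyz
  · rintro t (rfl | rfl | rfl)
    · exact pairSetoid_isAtom hxy
    · exact pairSetoid_isAtom hyz
    · exact pairSetoid_isAtom hxz
  · apply le_antisymm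
    · apply sSup_le
      rintro t (rfl | rfl | rfl)
      · exact le_sSup (Or.inl rfl)
      · exact le_sSup (Or.inr rfl)
      · -- c ≤ sSup S
        have hxySup : (sSup S).r x y :=
          Setoid.le_def.mp (le_sSup (show a ∈ S from Or.inl rfl)) (pairSetoid_rel x y)
        have hyzSup : (sSup S).r y z :=
          Setoid.le_def.mp (le_sSup (show b ∈ S from Or.inr rfl)) (pairSetoid_rel y z)
        have hxzSup : (sSup S).r x z := (sSup S).trans hxySup hyzSup
        rw [Setoid.le_def]
        rintro p q (rfl | ⟨rfl, rfl⟩ | ⟨rfl, rfl⟩)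
        · exact (sSup S).refl p
        · exact hxzSup
        · exact (sSup S).symm hxzSup
    · exact sSup_le_sSup (by intro t ht; rcases ht with rfl | rfl
                             exacts [Or.inl rfl, Or.inr (Or.inl rfl)])
  · have hab : a ≠ b := fun he => by
      rcases pairSetoid_inj hxy he with ⟨h1, h2⟩ | ⟨h1, h2⟩
      · exact hxy h1
      · exact hxz h1
    have hac : a ≠ c := fun he => by
      rcases pairSetoid_inj hxy he with ⟨h1, h2⟩ | ⟨h1, h2⟩
      · exact hyz h2
      · exact hxz h1
    have hbc : b ≠ c := fun he => by
      rcases pairSetoid_inj hyz he with ⟨h1, h2⟩ | ⟨h1, h2⟩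
      · exact hxy h1.symm
      · exact hyz h1
    have h2 : S.ncard = 2 := Set.ncard_pair hab
    have h3 : S'.ncard = 3 := by
      rw [hS', Set.ncard_insert_of_notMem (by simp [hab, hac]) (Set.toFinite _),
        Set.ncard_pair hbc]
    omega
end
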